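/- For every n ≥ 3, the number of permutations of length n that contain no 132 pattern and exactly one 123 pattern equals (n-2)·2^{n-3}. -/

import Mathlib

/-- The number of 132 patterns of a permutation `π` of `Fin n`:
triples of indices `i₁ < i₂ < i₃` with `π i₁ < π i₃ < π i₂`. -/
def count132 {n : ℕ} (π : Equiv.Perm (Fin n)) : ℕ :=
  (Finset.univ.filter (fun p : Fin n × Fin n × Fin n =>
    p.1 < p.2.1 ∧ p.2.1 < p.2.2 ∧ π p.1 < π p.2.2 ∧ π p.2.2 < π p.2.1)).card

/-- The number of 123 patterns of a permutation `π` of `Fin n`: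
triples of indices `i₁ < i₂ < i₃` with `π i₁ < π i₂ < π i₃`. -/
def count123 {n : ℕ} (π : Equiv.Perm (Fin n)) : ℕ :=
  (Finset.univ.filter (fun p : Fin n × Fin n × Fin n =>
    p.1 < p.2.1 ∧ p.2.1 < p.2.2 ∧ π p.1 < π p.2.1 ∧ π p.2.1 < π p.2.2)).card

/-- The number of 12 patterns of a permutation `π` of `Fin n`:
pairs of indices `i₁ < i₂` with `π i₁ < π i₂`. -/
def count12 {n : ℕ} (π : Equiv.Perm (Fin n)) : ℕ :=
  (Finset.univ.filter (fun p : Fin n × Fin n =>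
    p.1 < p.2 ∧ π p.1 < π p.2)).card


namespace NoPatAux

open Finset Equiv

variable {n : ℕ}


/-- Positions after `i` holding values larger than `π i`. -/
def L (π : Equiv.Perm (Fin n)) (i : Fin n) : Finset (Fin n) :=
  Finset.univ.filter fun j => i < j ∧ π i < π j

lemma mem_L {π : Equiv.Perm (Fin n)} {i j : Fin n} :
    j ∈ L π i ↔ i < j ∧ π i < π j := by simp [L]

/-- The code of a permutation. -/
def code (π : Equiv.Perm (Fin n)) (i : Fin n) : ℕ := (L π i).card

lemma code_lt (π : Equiv.Perm (Fin n)) (i : Fin n) : code π i < n - i.val := by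
  have h1 : L π i ⊆ Finset.Ioi i := by
    intro j hj
    simpa using (mem_L.mp hj).1
  have h2 : (L π i).card ≤ (Finset.Ioi i).card := Finset.card_le_card h1
  rw [Fin.card_Ioi] at h2
  have : (i : ℕ) < n := i.isLt
  unfold code
  omega

lemma code_add (π : Equiv.Perm (Fin n)) (i : Fin n) :
    code π i + (Finset.univ.filter fun j => j < i ∧ π i < π j).card
      = n - 1 - (π i).val := by
  have key : (Finset.univ.filter fun j : Fin n => π i < π j)
      = (Finset.univ.filter fun j => j < i ∧ π i < π j) ∪ L π i := by
    ext j
    simp only [Finset.mem_filter, Finset.mem_union, mem_L, Finset.mem_univ, true_and]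
    constructor
    · intro h
      rcases lt_trichotomy j i with hlt | heq | hgt
      · exact Or.inl ⟨hlt, h⟩
      · exact absurd (by rw [heq] at h; exact h) (lt_irrefl _)
      · exact Or.inr ⟨hgt, h⟩
    · rintro (⟨_, h⟩ | ⟨_, h⟩) <;> exact h
  have hdisj : Disjoint (Finset.univ.filter fun j => j < i ∧ π i < π j) (L π i) := by
    rw [Finset.disjoint_left]
    intro j hj hj'
    have h1 := (Finset.mem_filter.mp hj).2.1
    have h2 := (mem_L.mp hj').1
    exact absurd (h1.trans h2) (lt_irrefl _)
  have hcard : (Finset.univ.filter fun j : Fin n => π i < π j).card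
      = (Finset.univ.filter fun j => j < i ∧ π i < π j).card + (L π i).card := by
    rw [key, Finset.card_union_of_disjoint hdisj]
  have himg : (Finset.univ.filter fun j : Fin n => π i < π j)
      = (Finset.Ioi (π i)).image π.symm := by
    ext j
    simp only [Finset.mem_filter, Finset.mem_univ, true_and, Finset.mem_image,
      Finset.mem_Ioi]
    constructor
    · intro h; exact ⟨π j, h, π.symm_apply_apply j⟩
    · rintro ⟨v, hv, rfl⟩; simpa using hv
  have : (Finset.univ.filter fun j : Fin n => π i < π j).card = n - 1 - (π i).val := by
    rw [himg, Finset.card_image_of_injective _ π.symm.injective, Fin.card_Ioi]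
  unfold code
  omega

lemma code_aux (π σ : Equiv.Perm (Fin n)) (i : Fin n)
    (hcode : code π i = code σ i)
    (hpre : ∀ j : Fin n, j < i → π j = σ j)
    (hlt : π i < σ i) : False := by
  have e1 := code_add π i
  have e2 := code_add σ i
  set a := π i with ha
  set b := σ i with hb
  set A := Finset.univ.filter fun j => j < i ∧ π i < π j with hA
  set B := Finset.univ.filter fun j => j < i ∧ σ i < σ j with hB
  have han : (a : ℕ) < n := a.isLt
  have hbn : (b : ℕ) < n := b.isLt
  have hAB : A.card + (a : ℕ) = B.card + (b : ℕ) := by omega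
  set C := Finset.univ.filter fun j => j < i ∧ π i < π j ∧ π j < σ i with hC
  have hsplit : A = B ∪ C := by
    ext j
    simp only [hA, hB, hC, Finset.mem_filter, Finset.mem_union, Finset.mem_univ, true_and]
    constructor
    · rintro ⟨hji, hj⟩
      have hpj : π j = σ j := hpre j hji
      rcases lt_trichotomy (π j) (σ i) with h | h | h
      · exact Or.inr ⟨hji, hj, h⟩
      · exfalso
        have : σ j = σ i := by rw [← hpj, h]
        have h2 := σ.injective this
        rw [h2] at hji
        exact lt_irrefl _ hji
      · exact Or.inl ⟨hji, by rw [← hpj]; exact h⟩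
    · rintro (⟨hji, hj⟩ | ⟨hji, hj, _⟩)
      · have hpj : π j = σ j := hpre j hji
        exact ⟨hji, lt_trans hlt (by rw [hpj]; exact hj)⟩
      · exact ⟨hji, hj⟩
  have hdisj : Disjoint B C := by
    rw [Finset.disjoint_left]
    intro j hjB hjC
    have h1 := (Finset.mem_filter.mp hjB).2.2
    have h2 := (Finset.mem_filter.mp hjC).2.2.2
    have hpj : π j = σ j := hpre j (Finset.mem_filter.mp hjB).2.1
    rw [hpj] at h2
    exact absurd (h1.trans h2) (lt_irrefl _)
  have hcardA : A.card = B.card + C.card := by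
    rw [hsplit, Finset.card_union_of_disjoint hdisj]
  have hCcard : C.card ≤ (b : ℕ) - (a : ℕ) - 1 := by
    have : C.card ≤ (Finset.Ioo a b).card := by
      apply Finset.card_le_card_of_injOn (fun j => π j)
      · intro j hj
        rw [Finset.mem_coe] at hj
        simp only [hC, Finset.mem_filter, Finset.mem_univ, true_and] at hj
        simp only [Finset.mem_Ioo]
        exact Finset.mem_coe.mpr (Finset.mem_Ioo.mpr ⟨hj.2.1, hj.2.2⟩)
      · intro x _ y _ h
        exact π.injective h
    rwa [Fin.card_Ioo] at this
  have hab : (a : ℕ) < (b : ℕ) := hlt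
  omega

lemma code_injective : Function.Injective (code : Equiv.Perm (Fin n) → Fin n → ℕ) := by
  intro π σ h
  have key : ∀ m : ℕ, ∀ i : Fin n, (i : ℕ) = m → π i = σ i := by
    intro m
    induction m using Nat.strong_induction_on with
    | _ m ih =>
      intro i him
      have hpre : ∀ j : Fin n, j < i → π j = σ j := by
        intro j hj
        exact ih j.val (by rw [← him]; exact hj) j rfl
      have hci : code π i = code σ i := congrFun h i
      rcases lt_trichotomy (π i) (σ i) with hlt | heq | hgt
      · exact absurd (code_aux π σ i hci hpre hlt) (fun x => x)
      · exact heq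
      · exact absurd (code_aux σ π i hci.symm (fun j hj => (hpre j hj).symm) hgt) (fun x => x)
  exact Equiv.ext fun i => key i.val i rfl

lemma two_le_code {π : Equiv.Perm (Fin n)} {a b c : Fin n}
    (hb : b ∈ L π a) (hc : c ∈ L π a) (hbc : b ≠ c) : 2 ≤ code π a := by
  have : 1 < (L π a).card := Finset.one_lt_card.mpr ⟨b, hb, c, hc, hbc⟩
  exact this

lemma val_succ_le {i b : Fin n} (h : i < b) : (i : ℕ) + 1 ≤ (b : ℕ) := h

/-- Main characterization. -/
lemma char (π : Equiv.Perm (Fin n)) :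
    (count132 π = 0 ∧ count123 π = 1) ↔
    ∃ i j : Fin n, (j : ℕ) = (i : ℕ) + 1 ∧ code π i = 2 ∧ code π j = 1 ∧
      ∀ k : Fin n, k ≠ i → code π k ≤ 1 := by
  constructor
  · rintro ⟨h0, h1⟩
    have no132 : ∀ a b c : Fin n, a < b → b < c → π a < π c → π c < π b → False := by
      intro a b c hab hbc h1' h2'
      have : (a, b, c) ∈ (Finset.univ.filter (fun p : Fin n × Fin n × Fin n =>
          p.1 < p.2.1 ∧ p.2.1 < p.2.2 ∧ π p.1 < π p.2.2 ∧ π p.2.2 < π p.2.1)) := by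
        simp only [Finset.mem_filter, Finset.mem_univ, true_and]
        exact ⟨hab, hbc, h1', h2'⟩
      rw [Finset.card_eq_zero.mp h0] at this
      exact absurd this (Finset.notMem_empty _)
    obtain ⟨t, ht⟩ := Finset.card_eq_one.mp h1
    obtain ⟨i, j, k⟩ := t
    have htmem : (i, j, k) ∈ (Finset.univ.filter (fun p : Fin n × Fin n × Fin n =>
        p.1 < p.2.1 ∧ p.2.1 < p.2.2 ∧ π p.1 < π p.2.1 ∧ π p.2.1 < π p.2.2)) := by
      rw [ht]; exact Finset.mem_singleton_self _
    simp only [Finset.mem_filter, Finset.mem_univ, true_and] at htmem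
    obtain ⟨hij, hjk, hpij, hpjk⟩ := htmem
    have uniq : ∀ a b c : Fin n, a < b → b < c → π a < π b → π b < π c →
        a = i ∧ b = j ∧ c = k := by
      intro a b c hab hbc h1' h2'
      have : (a, b, c) ∈ (Finset.univ.filter (fun p : Fin n × Fin n × Fin n =>
          p.1 < p.2.1 ∧ p.2.1 < p.2.2 ∧ π p.1 < π p.2.1 ∧ π p.2.1 < π p.2.2)) := by
        simp only [Finset.mem_filter, Finset.mem_univ, true_and]
        exact ⟨hab, hbc, h1', h2'⟩
      rw [ht, Finset.mem_singleton] at this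
      refine ⟨congrArg Prod.fst this, ?_, ?_⟩
      · exact congrArg (fun p => p.2.1) this
      · exact congrArg (fun p => p.2.2) this
    have pair123 : ∀ a p q : Fin n, p ∈ L π a → q ∈ L π a → p < q →
        a = i ∧ p = j ∧ q = k := by
      intro a p q hp hq hpq
      obtain ⟨hap, hpp⟩ := mem_L.mp hp
      obtain ⟨haq, hpq'⟩ := mem_L.mp hq
      have hval : π p < π q := by
        rcases lt_trichotomy (π p) (π q) with h | h | h
        · exact h
        · exact absurd (π.injective h) (ne_of_lt hpq)
        · exact absurd (no132 a p q hap hpq hpq' h) (fun x => x)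
      exact uniq a p q hap hpq hpp hval
    have hjL : j ∈ L π i := mem_L.mpr ⟨hij, hpij⟩
    have hkL : k ∈ L π i := mem_L.mpr ⟨hij.trans hjk, hpij.trans hpjk⟩
    have hjk' : j ≠ k := ne_of_lt hjk
    have hci : code π i = 2 := by
      have hle2 : 2 ≤ code π i := two_le_code hjL hkL hjk'
      by_contra hne
      have hceq : code π i = (L π i).card := rfl
      have h3 : 3 ≤ (L π i).card := by
        rcases Nat.lt_or_ge (code π i) 3 with h | h
        · exact absurd (by omega : code π i = 2) hne
        · omega
      have : 1 ≤ (((L π i).erase j).erase k).card := by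
        have e1 := Finset.card_erase_of_mem hjL
        have hkL' : k ∈ (L π i).erase j := Finset.mem_erase.mpr ⟨(ne_of_lt hjk).symm, hkL⟩
        have e2 := Finset.card_erase_of_mem hkL'
        omega
      obtain ⟨m, hm⟩ := Finset.card_pos.mp (show 0 < (((L π i).erase j).erase k).card by omega)
      obtain ⟨hmk, hmj, hmL⟩ : m ≠ k ∧ m ≠ j ∧ m ∈ L π i := by
        have h1' := Finset.mem_erase.mp hm
        have h2' := Finset.mem_erase.mp h1'.2
        exact ⟨h1'.1, h2'.1, h2'.2⟩
      rcases lt_trichotomy m j with h | h | h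
      · exact hmj (pair123 i m j hmL hjL h).2.1
      · exact hmj h
      · exact hmk (pair123 i j m hjL hmL h).2.2
    have hLi : L π i = {j, k} := by
      have hsub : ({j, k} : Finset (Fin n)) ⊆ L π i := by
        intro x hx
        rcases Finset.mem_insert.mp hx with h | h
        · rw [h]; exact hjL
        · rw [Finset.mem_singleton.mp h]; exact hkL
      have hcard : ({j, k} : Finset (Fin n)).card = 2 := by
        rw [Finset.card_insert_of_notMem (by simp [hjk']), Finset.card_singleton]
      exact (Finset.eq_of_subset_of_card_le hsub (by rw [hcard]; exact le_of_eq hci)).symm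
    have hjval : (j : ℕ) = (i : ℕ) + 1 := by
      by_contra hne
      have hij' : (i : ℕ) < (j : ℕ) := hij
      have hlt : (i : ℕ) + 1 < (j : ℕ) := by omega
      set m : Fin n := ⟨(i : ℕ) + 1, by have := j.isLt; omega⟩ with hm
      have him : i < m := by rw [Fin.lt_def]; simp [hm]
      have hmj : m < j := by rw [Fin.lt_def]; simpa [hm] using hlt
      have hmnotL : m ∉ L π i := by
        rw [hLi]
        intro hmem
        rcases Finset.mem_insert.mp hmem with h | h
        · exact absurd (congrArg Fin.val h) (by have : (m:ℕ) < (j:ℕ) := hmj; omega)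
        · have hmk2 : m = k := Finset.mem_singleton.mp h
          have e1 : (j : ℕ) < (k : ℕ) := hjk
          have e2 : (m : ℕ) < (j : ℕ) := hmj
          have e3 : (m : ℕ) = (k : ℕ) := congrArg Fin.val hmk2
          omega
      have hpm : π m < π i := by
        rcases lt_trichotomy (π m) (π i) with h | h | h
        · exact h
        · exact absurd (π.injective h) (by intro e; rw [e] at him; exact lt_irrefl _ him)
        · exact absurd (mem_L.mpr ⟨him, h⟩) hmnotL
      have := (uniq m j k hmj hjk (hpm.trans hpij) hpjk).1
      rw [this] at him
      exact lt_irrefl _ him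
    have hcj : code π j = 1 := by
      have : L π j = {k} := by
        ext m
        simp only [mem_L, Finset.mem_singleton]
        constructor
        · rintro ⟨hjm, hpjm⟩
          have hmL : m ∈ L π i := mem_L.mpr ⟨hij.trans hjm, hpij.trans hpjm⟩
          rw [hLi] at hmL
          rcases Finset.mem_insert.mp hmL with h | h
          · exact absurd h (by intro e; rw [e] at hjm; exact lt_irrefl _ hjm)
          · exact Finset.mem_singleton.mp h
        · rintro rfl
          exact ⟨hjk, hpjk⟩
      rw [code, this, Finset.card_singleton]
    refine ⟨i, j, hjval, hci, hcj, ?_⟩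
    intro a ha
    by_contra hgt
    have h2 : 2 ≤ code π a := by omega
    have hceq : code π a = (L π a).card := rfl
    obtain ⟨p, hp, q, hq, hpq⟩ := Finset.one_lt_card.mp (by omega : 1 < (L π a).card)
    rcases lt_trichotomy p q with h | h | h
    · exact ha (pair123 a p q hp hq h).1
    · exact hpq h
    · exact ha (pair123 a q p hq hp h).1
  · rintro ⟨i, j, hjval, hci, hcj, hle⟩
    have hij : i < j := by rw [Fin.lt_def]; omega
    -- First: no 132 pattern.
    have no132 : ∀ a b e : Fin n, a < b → b < e → π a < π e → π e < π b → False := by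
      intro a b e hab hbe h1' h2'
      have hbL : b ∈ L π a := mem_L.mpr ⟨hab, h1'.trans h2'⟩
      have heL : e ∈ L π a := mem_L.mpr ⟨hab.trans hbe, h1'⟩
      have hbe' : b ≠ e := ne_of_lt hbe
      have hai : a = i := by
        by_contra hne
        have := hle a hne
        have := two_le_code hbL heL hbe'
        omega
      subst hai
      have hLa : L π a = {b, e} := by
        have hsub : ({b, e} : Finset (Fin n)) ⊆ L π a := by
          intro x hx
          rcases Finset.mem_insert.mp hx with h | h
          · rw [h]; exact hbL
          · rw [Finset.mem_singleton.mp h]; exact heL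
        have hcard : ({b, e} : Finset (Fin n)).card = 2 := by
          rw [Finset.card_insert_of_notMem (by simp [hbe']), Finset.card_singleton]
        exact (Finset.eq_of_subset_of_card_le hsub (by rw [hcard]; exact le_of_eq hci)).symm
      have hpaj : π a < π j := by
        by_contra hnot
        have hne : π j ≠ π a := fun h => (by
          have := π.injective h
          rw [this] at hij
          exact lt_irrefl _ hij)
        have hpja : π j < π a := lt_of_le_of_ne (not_lt.mp hnot) hne
        -- then b, e ∈ L π j, contradicting code π j = 1
        have hjb : j < b := by
          have h1'' : (a : ℕ) < (b : ℕ) := hab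
          have : j ≠ b := by
            intro hh
            rw [← hh] at hbL
            exact absurd (hpja.trans (mem_L.mp hbL).2) (lt_irrefl _)
          rw [Fin.lt_def]
          have : (j : ℕ) ≠ (b : ℕ) := fun hh => this (Fin.ext hh)
          omega
        have hje : j < e := hjb.trans hbe
        have hbLj : b ∈ L π j := mem_L.mpr ⟨hjb, hpja.trans (mem_L.mp hbL).2⟩
        have heLj : e ∈ L π j := mem_L.mpr ⟨hje, hpja.trans (mem_L.mp heL).2⟩
        have := two_le_code hbLj heLj hbe'
        omega
      have hjL : j ∈ L π a := mem_L.mpr ⟨hij, hpaj⟩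
      rw [hLa] at hjL
      have hjb : j = b := by
        rcases Finset.mem_insert.mp hjL with h | h
        · exact h
        · exfalso
          have hje : j = e := Finset.mem_singleton.mp h
          have h1'' : (a : ℕ) < (b : ℕ) := hab
          have h2'' : (b : ℕ) < (e : ℕ) := hbe
          have : (j : ℕ) = (e : ℕ) := congrArg Fin.val hje
          omega
      -- L π j is empty, contradicting code π j = 1
      have : L π j = ∅ := by
        rw [Finset.eq_empty_iff_forall_notMem]
        intro m hm
        obtain ⟨hjm, hpjm⟩ := mem_L.mp hm
        have hmL : m ∈ L π a := mem_L.mpr ⟨hij.trans hjm, hpaj.trans hpjm⟩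
        rw [hLa] at hmL
        rcases Finset.mem_insert.mp hmL with h | h
        · rw [h, ← hjb] at hjm; exact lt_irrefl _ hjm
        · rw [Finset.mem_singleton.mp h] at hpjm
          rw [hjb] at hpjm
          exact absurd h2' (not_lt.mpr (le_of_lt hpjm))
      rw [code, this] at hcj
      simp at hcj
    -- π i < π j
    have hpij : π i < π j := by
      by_contra hnot
      have hne : π j ≠ π i := fun h => (by
        have := π.injective h
        rw [this] at hij
        exact lt_irrefl _ hij)
      have hpji : π j < π i := lt_of_le_of_ne (not_lt.mp hnot) hne
      have hceq : code π i = (L π i).card := rfl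
      obtain ⟨p, hp, q, hq, hpq⟩ := Finset.one_lt_card.mp (by omega : 1 < (L π i).card)
      have key : ∀ x : Fin n, x ∈ L π i → x ∈ L π j := by
        intro x hx
        obtain ⟨hix, hpix⟩ := mem_L.mp hx
        have hxj : j ≠ x := by
          intro hh
          rw [hh] at hpji
          exact absurd hpix (not_lt.mpr (le_of_lt hpji))
        have : j < x := by
          rw [Fin.lt_def]
          have h1'' : (i : ℕ) < (x : ℕ) := hix
          have : (j : ℕ) ≠ (x : ℕ) := fun hh => hxj (Fin.ext hh)
          omega
        exact mem_L.mpr ⟨this, hpji.trans hpix⟩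
      have := two_le_code (key p hp) (key q hq) hpq
      omega
    have hjL : j ∈ L π i := mem_L.mpr ⟨hij, hpij⟩
    -- get k
    have herase : ((L π i).erase j).card = 1 := by
      have := Finset.card_erase_of_mem hjL
      rw [code] at hci
      omega
    obtain ⟨k, hk⟩ := Finset.card_eq_one.mp herase
    have hkmem : k ∈ (L π i).erase j := by rw [hk]; exact Finset.mem_singleton_self _
    have hkj : k ≠ j := (Finset.mem_erase.mp hkmem).1
    have hkL : k ∈ L π i := (Finset.mem_erase.mp hkmem).2
    have hLi : L π i = {j, k} := by
      rw [← Finset.insert_erase hjL, hk]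
    have hjk : j < k := by
      have hik : i < k := (mem_L.mp hkL).1
      rw [Fin.lt_def]
      have h1'' : (i : ℕ) < (k : ℕ) := hik
      have : (j : ℕ) ≠ (k : ℕ) := fun hh => hkj (Fin.ext hh).symm
      omega
    have hpjk : π j < π k := by
      rcases lt_trichotomy (π j) (π k) with h | h | h
      · exact h
      · exact absurd (π.injective h) (fun hh => hkj hh.symm)
      · exact absurd (no132 i j k hij hjk (mem_L.mp hkL).2 h) (fun x => x)
    constructor
    · rw [count132, Finset.card_eq_zero, Finset.eq_empty_iff_forall_notMem]
      rintro ⟨a, b, e⟩ hmem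
      simp only [Finset.mem_filter, Finset.mem_univ, true_and] at hmem
      exact no132 a b e hmem.1 hmem.2.1 hmem.2.2.1 hmem.2.2.2
    · rw [count123, Finset.card_eq_one]
      refine ⟨(i, j, k), ?_⟩
      ext ⟨a, b, e⟩
      simp only [Finset.mem_filter, Finset.mem_univ, true_and, Finset.mem_singleton,
        Prod.mk.injEq]
      constructor
      · rintro ⟨hab, hbe, h1', h2'⟩
        have hbL : b ∈ L π a := mem_L.mpr ⟨hab, h1'⟩
        have heL : e ∈ L π a := mem_L.mpr ⟨hab.trans hbe, h1'.trans h2'⟩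
        have hbe' : b ≠ e := ne_of_lt hbe
        have hai : a = i := by
          by_contra hne
          have := hle a hne
          have := two_le_code hbL heL hbe'
          omega
        subst hai
        rw [hLi] at hbL heL
        have hbmem := Finset.mem_insert.mp hbL
        have hemem := Finset.mem_insert.mp heL
        have hbj : b = j := by
          rcases hbmem with h | h
          · exact h
          · exfalso
            rcases hemem with h' | h'
            · rw [Finset.mem_singleton.mp h, h'] at hbe
              exact absurd hbe (not_lt.mpr (le_of_lt hjk))
            · rw [Finset.mem_singleton.mp h, Finset.mem_singleton.mp h'] at hbe
              exact lt_irrefl _ hbe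
        have hek : e = k := by
          rcases hemem with h' | h'
          · exfalso
            rw [hbj, h'] at hbe
            exact lt_irrefl _ hbe
          · exact Finset.mem_singleton.mp h'
        exact ⟨rfl, hbj, hek⟩
      · rintro ⟨rfl, rfl, rfl⟩
        exact ⟨hij, hjk, hpij, hpjk⟩

lemma prod_add_one (n : ℕ) : ∏ j ∈ Finset.range n, (j + 1) = Nat.factorial n := by
  induction n with
  | zero => simp
  | succ m ih => rw [Finset.prod_range_succ, ih, Nat.factorial_succ]; ring

lemma prod_sub (n : ℕ) : ∏ i : Fin n, (n - (i : ℕ)) = Nat.factorial n := by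
  rw [Fin.prod_univ_eq_prod_range]
  have h := Finset.prod_range_reflect (fun j => j + 1) n
  have h2 : ∏ j ∈ Finset.range n, (n - j) = ∏ j ∈ Finset.range n, (n - 1 - j + 1) := by
    apply Finset.prod_congr rfl
    intro j hj
    have := Finset.mem_range.mp hj
    omega
  rw [h2, h, prod_add_one]

lemma code_image (n : ℕ) :
    (Finset.univ : Finset (Equiv.Perm (Fin n))).image code
      = Fintype.piFinset (fun i : Fin n => Finset.range (n - (i : ℕ))) := by
  apply Finset.eq_of_subset_of_card_le
  · intro f hf
    obtain ⟨π, _, rfl⟩ := Finset.mem_image.mp hf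
    rw [Fintype.mem_piFinset]
    intro i
    rw [Finset.mem_range]
    exact code_lt π i
  · rw [Fintype.card_piFinset,
      Finset.card_image_of_injective _ code_injective]
    simp only [Finset.card_range]
    rw [prod_sub, Finset.card_univ, Fintype.card_perm, Fintype.card_fin]

def Econd {n : ℕ} (f : Fin n → ℕ) : Prop :=
  ∃ i j : Fin n, (j : ℕ) = (i : ℕ) + 1 ∧ f i = 2 ∧ f j = 1 ∧
    ∀ k : Fin n, k ≠ i → f k ≤ 1

instance : DecidablePred (Econd (n := n)) := fun f => by
  unfold Econd; infer_instance

lemma count_E (n : ℕ) (hn : 3 ≤ n) :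
    ((Fintype.piFinset (fun i : Fin n => Finset.range (n - (i : ℕ)))).filter Econd).card
      = (n - 2) * 2 ^ (n - 3) := by
  set T := Fintype.piFinset (fun i : Fin n => Finset.range (n - (i : ℕ))) with hT
  have hsplit : T.filter Econd
      = (Finset.univ.filter (fun i : Fin n => (i : ℕ) + 2 < n)).biUnion
          (fun i => T.filter (fun f => f i = 2 ∧
            (∀ j : Fin n, (j : ℕ) = (i : ℕ) + 1 → f j = 1) ∧
            ∀ k : Fin n, k ≠ i → f k ≤ 1)) := by
    ext f
    simp only [Finset.mem_biUnion, Finset.mem_filter, Finset.mem_univ, true_and]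
    constructor
    · rintro ⟨hfT, i, j, hj, h2, h1, hle⟩
      refine ⟨i, ?_, hfT, h2, ?_, hle⟩
      · have hfi : f i < n - (i : ℕ) := by
          have := Fintype.mem_piFinset.mp hfT i
          simpa using this
        omega
      · intro j' hj'
        have : j' = j := Fin.ext (by omega)
        rw [this]; exact h1
    · rintro ⟨i, hi, hfT, h2, h1, hle⟩
      refine ⟨hfT, i, ⟨(i : ℕ) + 1, by omega⟩, rfl, h2, h1 _ rfl, hle⟩
  rw [hsplit, Finset.card_biUnion]
  · have hcardeach : ∀ i ∈ Finset.univ.filter (fun i : Fin n => (i : ℕ) + 2 < n),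
        (T.filter (fun f => f i = 2 ∧
          (∀ j : Fin n, (j : ℕ) = (i : ℕ) + 1 → f j = 1) ∧
          ∀ k : Fin n, k ≠ i → f k ≤ 1)).card = 2 ^ (n - 3) := by
      intro i hi
      have hi2 : (i : ℕ) + 2 < n := (Finset.mem_filter.mp hi).2
      have hpi : T.filter (fun f => f i = 2 ∧
          (∀ j : Fin n, (j : ℕ) = (i : ℕ) + 1 → f j = 1) ∧
          ∀ k : Fin n, k ≠ i → f k ≤ 1)
          = Fintype.piFinset (fun j : Fin n =>
              if j = i then {2}
              else if (j : ℕ) = (i : ℕ) + 1 then {1}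
              else Finset.range (min 2 (n - (j : ℕ)))) := by
        ext f
        simp only [Finset.mem_filter, Fintype.mem_piFinset, hT, Finset.mem_range]
        constructor
        · rintro ⟨hfT, h2, h1, hle⟩
          intro j
          by_cases hji : j = i
          · rw [if_pos hji, hji, Finset.mem_singleton]; exact h2
          · rw [if_neg hji]
            by_cases hjs : (j : ℕ) = (i : ℕ) + 1
            · rw [if_pos hjs, Finset.mem_singleton]; exact h1 j hjs
            · rw [if_neg hjs, Finset.mem_range]
              have := hle j hji
              have := hfT j
              omega
        · intro h
          have hfT : ∀ j : Fin n, f j < n - (j : ℕ) := by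
            intro j
            have hj := h j
            by_cases hji : j = i
            · rw [if_pos hji, Finset.mem_singleton] at hj
              rw [hj, hji]; omega
            · rw [if_neg hji] at hj
              by_cases hjs : (j : ℕ) = (i : ℕ) + 1
              · rw [if_pos hjs, Finset.mem_singleton] at hj
                rw [hj]; omega
              · rw [if_neg hjs, Finset.mem_range] at hj
                omega
          refine ⟨hfT, ?_, ?_, ?_⟩
          · have hj := h i
            rw [if_pos rfl, Finset.mem_singleton] at hj
            exact hj
          · intro j hjs
            have hj := h j
            have hji : j ≠ i := by
              intro e; rw [e] at hjs; omega
            rw [if_neg hji, if_pos hjs, Finset.mem_singleton] at hj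
            exact hj
          · intro k hki
            have hj := h k
            rw [if_neg hki] at hj
            by_cases hjs : (k : ℕ) = (i : ℕ) + 1
            · rw [if_pos hjs, Finset.mem_singleton] at hj; omega
            · rw [if_neg hjs, Finset.mem_range] at hj; omega
      rw [hpi, Fintype.card_piFinset]
      have hcongr : ∀ j : Fin n,
          (if j = i then ({2} : Finset ℕ)
            else if (j : ℕ) = (i : ℕ) + 1 then {1}
            else Finset.range (min 2 (n - (j : ℕ)))).card
          = (if (j : ℕ) = (i : ℕ) ∨ (j : ℕ) = (i : ℕ) + 1 ∨ (j : ℕ) = n - 1 then 1 else 2) := by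
        intro j
        by_cases hji : j = i
        · rw [if_pos hji, Finset.card_singleton,
            if_pos (Or.inl (congrArg Fin.val hji))]
        · rw [if_neg hji]
          by_cases hjs : (j : ℕ) = (i : ℕ) + 1
          · rw [if_pos hjs, Finset.card_singleton, if_pos (Or.inr (Or.inl hjs))]
          · rw [if_neg hjs, Finset.card_range]
            have hji' : (j : ℕ) ≠ (i : ℕ) := fun e => hji (Fin.ext e)
            by_cases hlast : (j : ℕ) = n - 1
            · rw [if_pos (Or.inr (Or.inr hlast))]
              omega
            · rw [if_neg (by tauto)]
              have := j.isLt
              omega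
      rw [Finset.prod_congr rfl (fun j _ => hcongr j)]
      rw [← Finset.prod_filter_mul_prod_filter_not (Finset.univ : Finset (Fin n))
        (fun j : Fin n => (j : ℕ) = (i : ℕ) ∨ (j : ℕ) = (i : ℕ) + 1 ∨ (j : ℕ) = n - 1)]
      have hone : ∏ j ∈ (Finset.univ : Finset (Fin n)).filter
          (fun j : Fin n => (j : ℕ) = (i : ℕ) ∨ (j : ℕ) = (i : ℕ) + 1 ∨ (j : ℕ) = n - 1),
          (if (j : ℕ) = (i : ℕ) ∨ (j : ℕ) = (i : ℕ) + 1 ∨ (j : ℕ) = n - 1 then 1 else 2) = 1 := by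
        apply Finset.prod_eq_one
        intro m hm
        rw [if_pos (Finset.mem_filter.mp hm).2]
      have htwo : ∏ j ∈ (Finset.univ : Finset (Fin n)).filter
          (fun j : Fin n => ¬((j : ℕ) = (i : ℕ) ∨ (j : ℕ) = (i : ℕ) + 1 ∨ (j : ℕ) = n - 1)),
          (if (j : ℕ) = (i : ℕ) ∨ (j : ℕ) = (i : ℕ) + 1 ∨ (j : ℕ) = n - 1 then 1 else 2)
          = 2 ^ (n - 3) := by
        rw [Finset.prod_congr rfl (fun m hm => if_neg (Finset.mem_filter.mp hm).2),
          Finset.prod_const]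
        congr 1
        have hfil : (Finset.univ : Finset (Fin n)).filter
            (fun j : Fin n => (j : ℕ) = (i : ℕ) ∨ (j : ℕ) = (i : ℕ) + 1 ∨ (j : ℕ) = n - 1)
            = {i, ⟨(i : ℕ) + 1, by omega⟩, ⟨n - 1, by omega⟩} := by
          ext m
          simp only [Finset.mem_filter, Finset.mem_univ, true_and, Finset.mem_insert,
            Finset.mem_singleton, Fin.ext_iff]
        have hcard3 : ({i, ⟨(i : ℕ) + 1, by omega⟩, ⟨n - 1, by omega⟩} : Finset (Fin n)).card
            = 3 := by
          rw [Finset.card_insert_of_notMem (by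
            simp only [Finset.mem_insert, Finset.mem_singleton, Fin.ext_iff]; omega),
            Finset.card_insert_of_notMem (by
            simp only [Finset.mem_singleton, Fin.ext_iff]; omega),
            Finset.card_singleton]
        have := Finset.card_filter_add_card_filter_not
          (s := (Finset.univ : Finset (Fin n)))
          (p := fun j => (j : ℕ) = (i : ℕ) ∨ (j : ℕ) = (i : ℕ) + 1 ∨ (j : ℕ) = n - 1)
        rw [hfil, hcard3, Finset.card_univ, Fintype.card_fin] at this
        omega
      rw [hone, htwo, one_mul]
    rw [Finset.sum_congr rfl hcardeach, Finset.sum_const, smul_eq_mul]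
    congr 1
    have : Finset.univ.filter (fun i : Fin n => (i : ℕ) + 2 < n)
        = Finset.Iio (⟨n - 2, by omega⟩ : Fin n) := by
      ext i
      simp only [Finset.mem_filter, Finset.mem_univ, true_and, Finset.mem_Iio, Fin.lt_def]
      omega
    rw [this, Fin.card_Iio]
  · intro i _ i' _ hii'
    rw [Function.onFun, Finset.disjoint_left]
    intro f hf hf'
    have h2 := (Finset.mem_filter.mp hf).2.1
    have hle := (Finset.mem_filter.mp hf').2.2.2
    have := hle i hii'
    omega


lemma econd_iff {n : ℕ} (f : Fin n → ℕ) :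
    Econd f ↔ ∃ i j : Fin n, (j : ℕ) = (i : ℕ) + 1 ∧ f i = 2 ∧ f j = 1 ∧
      ∀ k : Fin n, k ≠ i → f k ≤ 1 := Iff.rfl

end NoPatAux

theorem card_no132_one123 (n : ℕ) (hn : 3 ≤ n) :
    (Finset.univ.filter (fun π : Equiv.Perm (Fin n) =>
      count132 π = 0 ∧ count123 π = 1)).card = (n - 2) * 2 ^ (n - 3) := by
  rw [← NoPatAux.count_E n hn]
  rw [← Finset.card_image_of_injective
    (Finset.univ.filter (fun π : Equiv.Perm (Fin n) =>
      count132 π = 0 ∧ count123 π = 1)) (NoPatAux.code_injective (n := n))]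
  congr 1
  ext f
  constructor
  · intro hf
    obtain ⟨π, hπ, rfl⟩ := Finset.mem_image.mp hf
    have hS := Finset.mem_filter.mp hπ
    rw [Finset.mem_filter]
    constructor
    · rw [Fintype.mem_piFinset]
      intro i
      rw [Finset.mem_range]
      exact NoPatAux.code_lt π i
    · rw [NoPatAux.econd_iff]
      exact (NoPatAux.char π).mp hS.2
  · intro hf
    have hm := Finset.mem_filter.mp hf
    have hmem : f ∈ (Finset.univ : Finset (Equiv.Perm (Fin n))).image NoPatAux.code := by
      rw [NoPatAux.code_image]
      exact hm.1
    obtain ⟨π, _, rfl⟩ := Finset.mem_image.mp hmem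
    apply Finset.mem_image_of_mem
    rw [Finset.mem_filter]
    refine ⟨Finset.mem_univ _, (NoPatAux.char π).mpr ?_⟩
    rw [← NoPatAux.econd_iff]
    exact hm.2
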